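/- Let f : {0,1}^n → ℝ, let p ∈ (0,1), and let 1 > α ≥ β > 0. Then (⟨T_α^{(p)} f, f⟩_p / ‖f‖_{L₂(p)}²)^{1/log(1/α)} ≤ (⟨T_β^{(p)} f, f⟩_p / ‖f‖_{L₂(p)}²)^{1/log(1/β)}, where f is assumed not identically zero. -/

import Mathlib

open scoped BigOperators

/-- The `p`-biased product measure weight of a point `x ∈ {0,1}ⁿ`. -/
noncomputable def biasedWeight (p : ℝ) {n : ℕ} (x : Fin n → Bool) : ℝ :=
  ∏ i, if x i then p else 1 - p

/-- The `p`-biased Fourier character `φ_S^{(p)}`. -/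
noncomputable def biasedChar (p : ℝ) {n : ℕ} (S : Finset (Fin n)) (x : Fin n → Bool) : ℝ :=
  ∏ i ∈ S, ((if x i then (1:ℝ) else 0) - p) / Real.sqrt (p * (1 - p))

/-- The `p`-biased Fourier coefficient `f̂^{(p)}(S)`. -/
noncomputable def biasedCoeff (p : ℝ) {n : ℕ} (f : (Fin n → Bool) → ℝ)
    (S : Finset (Fin n)) : ℝ :=
  ∑ x, biasedWeight p x * f x * biasedChar p S x

section Aux

variable {n : ℕ} {p : ℝ}

lemma biasedWeight_pos (hp0 : 0 < p) (hp1 : p < 1) (x : Fin n → Bool) :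
    0 < biasedWeight p x := by
  unfold biasedWeight
  exact Finset.prod_pos fun i _ => by cases h : x i <;> simp [h] <;> linarith

lemma coord_kernel (hp0 : 0 < p) (hp1 : p < 1) (b c : Bool) :
    (((if b then (1:ℝ) else 0) - p) / Real.sqrt (p * (1 - p))) *
        (((if c then (1:ℝ) else 0) - p) / Real.sqrt (p * (1 - p))) + 1
      = if b = c then (if b then p else 1 - p)⁻¹ else 0 := by
  have hpq : 0 < p * (1 - p) := by nlinarith
  have hs : Real.sqrt (p * (1 - p)) * Real.sqrt (p * (1 - p)) = p * (1 - p) :=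
    Real.mul_self_sqrt hpq.le
  rw [div_mul_div_comm, hs]
  have hp' : p ≠ 0 := hp0.ne'
  have hq' : (1:ℝ) - p ≠ 0 := by linarith
  cases b <;> cases c <;> simp <;> field_simp
  case false.false => ring
  all_goals ring

lemma char_kernel (hp0 : 0 < p) (hp1 : p < 1) (x y : Fin n → Bool) :
    ∑ S : Finset (Fin n), biasedChar p S x * biasedChar p S y
      = if x = y then (biasedWeight p x)⁻¹ else 0 := by
  have h1 : ∀ S : Finset (Fin n), biasedChar p S x * biasedChar p S y
      = ∏ i ∈ S, ((((if x i then (1:ℝ) else 0) - p) / Real.sqrt (p * (1 - p))) *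
          (((if y i then (1:ℝ) else 0) - p) / Real.sqrt (p * (1 - p)))) := fun S =>
    (Finset.prod_mul_distrib).symm
  simp only [h1]
  have h2 : ∑ S : Finset (Fin n), ∏ i ∈ S, ((((if x i then (1:ℝ) else 0) - p) / Real.sqrt (p * (1 - p))) *
          (((if y i then (1:ℝ) else 0) - p) / Real.sqrt (p * (1 - p))))
      = ∏ i : Fin n, ((((if x i then (1:ℝ) else 0) - p) / Real.sqrt (p * (1 - p))) *
          (((if y i then (1:ℝ) else 0) - p) / Real.sqrt (p * (1 - p))) + 1) := by
    rw [Finset.prod_add]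
    simp [Finset.powerset_univ]
  rw [h2]
  have h3 : ∀ i : Fin n, ((((if x i then (1:ℝ) else 0) - p) / Real.sqrt (p * (1 - p))) *
          (((if y i then (1:ℝ) else 0) - p) / Real.sqrt (p * (1 - p))) + 1)
      = if x i = y i then (if x i then p else 1 - p)⁻¹ else 0 := fun i =>
    coord_kernel hp0 hp1 (x i) (y i)
  simp only [h3]
  by_cases hxy : x = y
  · subst hxy
    simp [biasedWeight, Finset.prod_inv_distrib]
  · rw [if_neg hxy]
    obtain ⟨i, hi⟩ := Function.ne_iff.mp hxy
    exact Finset.prod_eq_zero (Finset.mem_univ i) (by simp [hi])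

lemma inversion (hp0 : 0 < p) (hp1 : p < 1) (f : (Fin n → Bool) → ℝ) (x : Fin n → Bool) :
    ∑ S : Finset (Fin n), biasedCoeff p f S * biasedChar p S x = f x := by
  simp only [biasedCoeff, Finset.sum_mul]
  rw [Finset.sum_comm]
  have : ∀ y, ∑ S : Finset (Fin n), biasedWeight p y * f y * biasedChar p S y * biasedChar p S x
      = biasedWeight p y * f y * if y = x then (biasedWeight p y)⁻¹ else 0 := by
    intro y
    rw [← char_kernel hp0 hp1 y x, Finset.mul_sum]
    simp [mul_assoc]
  have h2 : ∀ y, biasedWeight p y * f y * (if y = x then (biasedWeight p y)⁻¹ else 0)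
      = if y = x then f y else 0 := by
    intro y
    split
    · rw [mul_comm (biasedWeight p y) (f y), mul_assoc,
        mul_inv_cancel₀ (biasedWeight_pos hp0 hp1 y).ne', mul_one]
    · rw [mul_zero]
  simp only [this, h2]
  simp

lemma parseval (hp0 : 0 < p) (hp1 : p < 1) (f : (Fin n → Bool) → ℝ) :
    ∑ x, biasedWeight p x * f x ^ 2 = ∑ S : Finset (Fin n), biasedCoeff p f S ^ 2 := by
  have h : ∀ x, biasedWeight p x * f x ^ 2
      = ∑ S : Finset (Fin n), biasedCoeff p f S * (biasedWeight p x * f x * biasedChar p S x) := by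
    intro x
    have : ∑ S : Finset (Fin n), biasedCoeff p f S * (biasedWeight p x * f x * biasedChar p S x)
        = (biasedWeight p x * f x) * ∑ S : Finset (Fin n), biasedCoeff p f S * biasedChar p S x := by
      rw [Finset.mul_sum]; apply Finset.sum_congr rfl; intros; ring
    rw [this, inversion hp0 hp1]
    ring
  simp only [h]
  rw [Finset.sum_comm]
  apply Finset.sum_congr rfl
  intro S _
  rw [← Finset.mul_sum, ← biasedCoeff, sq]

end Aux

/-- Spectral comparison of noise levels: for `0 < β ≤ α < 1` and `f ≠ 0`,
`(⟨T_α f, f⟩_p/‖f‖²)^{1/log(1/α)} ≤ (⟨T_β f, f⟩_p/‖f‖²)^{1/log(1/β)}`,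
where `⟨T_ρ f, f⟩_p = ∑_S ρ^{|S|} f̂^{(p)}(S)²` and `‖f‖²_{L₂(p)} = E_{π_p^{⊗n}}[f²]`. -/
theorem compare_correlation
    {n : ℕ} (f : (Fin n → Bool) → ℝ) (hf : f ≠ 0)
    (p : ℝ) (hp : p ∈ Set.Ioo (0:ℝ) 1)
    (α β : ℝ) (hβ : 0 < β) (hβα : β ≤ α) (hα : α < 1) :
    ((∑ S : Finset (Fin n), α ^ S.card * biasedCoeff p f S ^ 2)
        / ∑ x, biasedWeight p x * f x ^ 2) ^ (1 / Real.log (1 / α))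
      ≤ ((∑ S : Finset (Fin n), β ^ S.card * biasedCoeff p f S ^ 2)
        / ∑ x, biasedWeight p x * f x ^ 2) ^ (1 / Real.log (1 / β)) := by
  obtain ⟨hp0, hp1⟩ := hp
  have hα0 : 0 < α := lt_of_lt_of_le hβ hβα
  have hβ1 : β < 1 := lt_of_le_of_lt hβα hα
  set a := Real.log (1 / α) with ha_def
  set b := Real.log (1 / β) with hb_def
  have ha : a = -Real.log α := by rw [ha_def, one_div, Real.log_inv]
  have hb : b = -Real.log β := by rw [hb_def, one_div, Real.log_inv]
  have ha0 : 0 < a := by rw [ha]; linarith [Real.log_neg hα0 hα]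
  have hb0 : 0 < b := by rw [hb]; linarith [Real.log_neg hβ hβ1]
  have hab : a ≤ b := by
    rw [ha, hb]
    have := Real.log_le_log hβ hβα
    linarith
  -- key rpow identity : α ^ (b/a) = β
  have hαβ : α ^ (b / a) = β := by
    rw [Real.rpow_def_of_pos hα0]
    have : Real.log α * (b / a) = -b := by
      rw [ha] at *
      field_simp
      rw [div_self (by linarith : Real.log α < 0).ne]
    rw [this, hb, neg_neg, Real.exp_log hβ]
  set N := ∑ x, biasedWeight p x * f x ^ 2 with hN_def
  have hNpos : 0 < N := by
    obtain ⟨x0, hx0⟩ := Function.ne_iff.mp hf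
    apply Finset.sum_pos'
      (fun x _ => mul_nonneg (biasedWeight_pos hp0 hp1 x).le (sq_nonneg _))
    exact ⟨x0, Finset.mem_univ x0,
      mul_pos (biasedWeight_pos hp0 hp1 x0)
        (lt_of_le_of_ne (sq_nonneg _) (Ne.symm (pow_ne_zero 2 hx0)))⟩
  have hpars : ∑ S : Finset (Fin n), biasedCoeff p f S ^ 2 = N := (parseval hp0 hp1 f).symm
  -- Jensen
  have hJ : ∑ S : Finset (Fin n), (biasedCoeff p f S ^ 2 / N) * α ^ S.card
      ≤ (∑ S : Finset (Fin n), (biasedCoeff p f S ^ 2 / N) * β ^ S.card) ^ (a / b) := by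
    have := Real.arith_mean_le_rpow_mean (s := Finset.univ)
      (fun S : Finset (Fin n) => biasedCoeff p f S ^ 2 / N)
      (fun S : Finset (Fin n) => α ^ S.card)
      (fun S _ => by positivity)
      (by rw [← Finset.sum_div, hpars, div_self hNpos.ne'])
      (fun S _ => by positivity)
      (p := b / a) ((one_le_div ha0).mpr hab)
    have hz : ∀ S : Finset (Fin n), (α ^ S.card : ℝ) ^ (b / a) = β ^ S.card := by
      intro S
      rw [← Real.rpow_natCast α S.card, ← Real.rpow_mul hα0.le, mul_comm,
        Real.rpow_mul hα0.le, hαβ, Real.rpow_natCast]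
    simp only [hz] at this
    have hinv : 1 / (b / a) = a / b := by field_simp
    rwa [hinv] at this
  have hA : ∑ S : Finset (Fin n), (biasedCoeff p f S ^ 2 / N) * α ^ S.card
      = (∑ S : Finset (Fin n), α ^ S.card * biasedCoeff p f S ^ 2) / N := by
    rw [Finset.sum_div]; apply Finset.sum_congr rfl; intros; ring
  have hB : ∑ S : Finset (Fin n), (biasedCoeff p f S ^ 2 / N) * β ^ S.card
      = (∑ S : Finset (Fin n), β ^ S.card * biasedCoeff p f S ^ 2) / N := by
    rw [Finset.sum_div]; apply Finset.sum_congr rfl; intros; ring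
  rw [hA, hB] at hJ
  set A := (∑ S : Finset (Fin n), α ^ S.card * biasedCoeff p f S ^ 2) / N
  set B := (∑ S : Finset (Fin n), β ^ S.card * biasedCoeff p f S ^ 2) / N
  have hAnn : 0 ≤ A := by
    apply div_nonneg _ hNpos.le
    exact Finset.sum_nonneg fun S _ => by positivity
  have hBnn : 0 ≤ B := by
    apply div_nonneg _ hNpos.le
    exact Finset.sum_nonneg fun S _ => by positivity
  calc A ^ (1 / a) ≤ (B ^ (a / b)) ^ (1 / a) :=
        Real.rpow_le_rpow hAnn hJ (by positivity)
    _ = B ^ (1 / b) := by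
        rw [← Real.rpow_mul hBnn]
        congr 1
        field_simp
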